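/- Let J be a strongly stable ideal in S, m ≥ sat(J) an integer, G a J-marked set, g a homogeneous polynomial of degree ℓ ≥ m, and V_ℓ = {x^δ f_α : f_α ∈ G, |δ + α| = ℓ, x^δ x^α = x^α ∗_J x^δ}. Then g ∈ ⟨V_ℓ⟩ if and only if x_0 · g ∈ ⟨V_{ℓ+1}⟩. -/

import Mathlib

open MvPolynomial

namespace Paper

/-- Monomials (exponent vectors) in `N` variables. -/
abbrev Mon (N : ℕ) := Fin N →₀ ℕ

variable {N : ℕ}

/-- Total degree of a monomial. -/
def mdeg (u : Mon N) : ℕ := u.sum fun _ e => e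

/-- `BorelStep a b` : `b` is obtained from `a` by one increasing elementary move,
i.e. `x^a · x_j = x^b · x_i` with `i < j`. -/
def BorelStep (a b : Mon N) : Prop :=
  ∃ i j : Fin N, i < j ∧ a + Finsupp.single j 1 = b + Finsupp.single i 1

/-- `BorelLt a b` : `a <_B b`, i.e. `b` is obtained from `a` by a nonempty
sequence of increasing elementary moves. -/
def BorelLt (a b : Mon N) : Prop := Relation.TransGen BorelStep a b

/-- A (combinatorially encoded) monomial ideal: a set of monomials closed
under multiplication by monomials. -/
def MonIdeal (J : Set (Mon N)) : Prop := ∀ u ∈ J, ∀ d : Mon N, u + d ∈ J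

/-- A strongly stable monomial ideal. -/
def StronglyStable (J : Set (Mon N)) : Prop :=
  MonIdeal J ∧ ∀ b ∈ J, ∀ a, BorelLt b a → a ∈ J

/-- The minimal monomial basis `B_J` of a monomial ideal. -/
def MinBasis (J : Set (Mon N)) : Set (Mon N) :=
  {u | u ∈ J ∧ ∀ v ∈ J, v ≤ u → v = u}

/-- `min(x^a) ≥ max(x^h)`. -/
def StarCond (a h : Mon N) : Prop :=
  ∀ i j : Fin N, a i ≠ 0 → h j ≠ 0 → j ≤ i


variable (K : Type) [Field K]

/-- The monomial `x^u` as a polynomial. -/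
noncomputable def mono {N : ℕ} (u : Mon N) : MvPolynomial (Fin N) K :=
  MvPolynomial.monomial u (1 : K)

/-- The (actual) monomial ideal of `S` spanned by a set of monomials. -/
noncomputable def idealOf {N : ℕ} (J : Set (Mon N)) : Ideal (MvPolynomial (Fin N) K) :=
  Ideal.span (mono K '' J)

/-- The irrelevant maximal ideal `(x_0, …, x_n)`. -/
noncomputable def irrel (N : ℕ) : Ideal (MvPolynomial (Fin N) K) :=
  Ideal.span (Set.range MvPolynomial.X)

/-- The saturation `I^sat = ⋃_j (I : (x_0,…,x_n)^j)`. -/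
noncomputable def satIdeal {N : ℕ} (I : Ideal (MvPolynomial (Fin N) K)) :
    Ideal (MvPolynomial (Fin N) K) :=
  ⨆ k : ℕ, Submodule.colon I ((irrel K N ^ k : Ideal (MvPolynomial (Fin N) K)) : Set (MvPolynomial (Fin N) K))

/-- The satiety of a homogeneous ideal: the smallest `m` such that
`I_t = (I^sat)_t` for all `t ≥ m`. -/
noncomputable def satiety {N : ℕ} (I : Ideal (MvPolynomial (Fin N) K)) : ℕ :=
  sInf {m | ∀ t, m ≤ t → ∀ p : MvPolynomial (Fin N) K,
    p.IsHomogeneous t → (p ∈ I ↔ p ∈ satIdeal K I)}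

/-- The saturation of a combinatorial monomial ideal. -/
def msat {N : ℕ} (J : Set (Mon N)) : Set (Mon N) :=
  {u | ∃ k : ℕ, ∀ d : Mon N, mdeg d = k → u + d ∈ J}

/-- The satiety of a combinatorial monomial ideal. -/
noncomputable def msatiety {N : ℕ} (J : Set (Mon N)) : ℕ :=
  sInf {m | ∀ u : Mon N, m ≤ mdeg u → (u ∈ J ↔ u ∈ msat J)}

/-- A homogeneous `J`-marked set, given as a function assigning to each
`x^α ∈ B_J` the marked polynomial `f_α` with head term `x^α`. -/
def SMarkedSet {N : ℕ} (J : Set (Mon N)) (g : Mon N → MvPolynomial (Fin N) K) : Prop :=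
  ∀ α ∈ MinBasis J,
    MvPolynomial.coeff α (g α) = 1 ∧
    (g α).IsHomogeneous (mdeg α) ∧
    ∀ u ∈ (g α).support, u ≠ α → u ∉ J

/-- `V_ℓ = {x^δ f_α : f_α ∈ G, |δ+α| = ℓ, x^δ x^α = x^α ∗_J x^δ}`. -/
def Vset {N : ℕ} (J : Set (Mon N)) (g : Mon N → MvPolynomial (Fin N) K) (ℓ : ℕ) :
    Set (MvPolynomial (Fin N) K) :=
  {q | ∃ α δ : Mon N, α ∈ MinBasis J ∧ StarCond α δ ∧ mdeg α + mdeg δ = ℓ ∧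
    q = mono K δ * g α}

/-! ### Auxiliary lemmas -/

section AuxMon

variable {N : ℕ}

lemma mdeg_add (a b : Mon N) : mdeg (a + b) = mdeg a + mdeg b := by
  classical
  simpa [mdeg] using Finsupp.sum_add_index' (by simp) (by simp) (f := a) (g := b)
    (h := fun (_ : Fin N) (e : ℕ) => e)

lemma mdeg_single (i : Fin N) (k : ℕ) : mdeg (Finsupp.single i k) = k := by
  simp [mdeg, Finsupp.sum_single_index]

lemma apply_le_mdeg (d : Mon N) (i : Fin N) : d i ≤ mdeg d := by
  classical
  by_cases hi : d i = 0
  · simp [hi]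
  · exact Finset.single_le_sum (f := fun j => d j) (by intros; positivity)
      (Finsupp.mem_support_iff.mpr hi)

lemma mdeg_eq_zero {d : Mon N} : mdeg d = 0 ↔ d = 0 := by
  constructor
  · intro h
    ext i
    simp only [Finsupp.coe_zero, Pi.zero_apply]
    have := apply_le_mdeg d i
    omega
  · rintro rfl; simp [mdeg]

lemma eq_of_le_of_mdeg_le {a b : Mon N} (h : a ≤ b) (h2 : mdeg b ≤ mdeg a) : a = b := by
  have hb : a + (b - a) = b := by
    rw [add_comm]; exact tsub_add_cancel_of_le h
  have hd := mdeg_add a (b - a)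
  rw [hb] at hd
  have h0 : mdeg (b - a) = 0 := by omega
  have h0' := mdeg_eq_zero.mp h0
  rw [h0', add_zero] at hb
  exact hb

lemma mdeg_eq_one {d : Mon N} (h : mdeg d = 1) : ∃ i, d = Finsupp.single i 1 := by
  classical
  have hd : d ≠ 0 := by intro h0; rw [h0] at h; simp [mdeg] at h
  obtain ⟨i, hi⟩ := Finsupp.ne_iff.mp hd
  simp only [Finsupp.coe_zero, Pi.zero_apply] at hi
  refine ⟨i, ?_⟩
  have h1 : Finsupp.single i 1 ≤ d := Finsupp.single_le_iff.mpr (by omega)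
  exact (eq_of_le_of_mdeg_le h1 (by rw [mdeg_single]; omega)).symm

lemma exists_le_mdeg {d : Mon N} {k : ℕ} (h : k ≤ mdeg d) : ∃ d', d' ≤ d ∧ mdeg d' = k := by
  classical
  suffices H : ∀ (n : ℕ) (d : Mon N) (k : ℕ), mdeg d - k = n → k ≤ mdeg d →
      ∃ d', d' ≤ d ∧ mdeg d' = k by exact H (mdeg d - k) d k rfl h
  intro n
  induction n with
  | zero => intro d k hn h; exact ⟨d, le_rfl, by omega⟩
  | succ n ih =>
      intro d k hn h
      have hk : k < mdeg d := by omega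
      have hd : d ≠ 0 := by
        intro h0; rw [h0] at hk; simp [mdeg] at hk
      obtain ⟨i, hi⟩ := Finsupp.ne_iff.mp hd
      simp only [Finsupp.coe_zero, Pi.zero_apply] at hi
      have h1 : Finsupp.single i 1 ≤ d := Finsupp.single_le_iff.mpr (by omega)
      have hdd : mdeg (d - Finsupp.single i 1) = mdeg d - 1 := by
        have hc : (d - Finsupp.single i 1) + Finsupp.single i 1 = d := tsub_add_cancel_of_le h1
        have h2 := mdeg_add (d - Finsupp.single i 1) (Finsupp.single i 1)
        rw [hc, mdeg_single] at h2
        omega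
      obtain ⟨d', hle, hdeg⟩ := ih (d - Finsupp.single i 1) k (by omega) (by omega)
      exact ⟨d', hle.trans tsub_le_self, hdeg⟩

/-- Lex order on monomials comparing from the largest variable down. -/
def dLt (a b : Mon N) : Prop := ∃ k, a k < b k ∧ ∀ i, k < i → a i = b i

lemma dLt_irrefl (a : Mon N) : ¬ dLt a a := by
  rintro ⟨k, hk, -⟩; omega

lemma dLt_trans {a b c : Mon N} (h1 : dLt a b) (h2 : dLt b c) : dLt a c := by
  obtain ⟨k1, hk1, ht1⟩ := h1
  obtain ⟨k2, hk2, ht2⟩ := h2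
  rcases lt_trichotomy k1 k2 with h | h | h
  · exact ⟨k2, by rw [ht1 k2 h]; exact hk2, fun i hi => (ht1 i (h.trans hi)).trans (ht2 i hi)⟩
  · subst h; exact ⟨k1, hk1.trans hk2, fun i hi => (ht1 i hi).trans (ht2 i hi)⟩
  · exact ⟨k1, by rw [← ht2 k1 h]; exact hk1, fun i hi => (ht1 i hi).trans (ht2 i (h.trans hi))⟩

lemma dLt_total {a b : Mon N} (h : a ≠ b) : dLt a b ∨ dLt b a := by
  classical
  set s := (a.support ∪ b.support).filter (fun i => a i ≠ b i) with hs
  have hmem : ∀ i : Fin N, a i ≠ b i → i ∈ s := by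
    intro i hi
    refine Finset.mem_filter.mpr ⟨Finset.mem_union.mpr ?_, hi⟩
    by_cases h0 : a i = 0
    · exact Or.inr (Finsupp.mem_support_iff.mpr (by omega))
    · exact Or.inl (Finsupp.mem_support_iff.mpr h0)
  have hne : s.Nonempty := by
    obtain ⟨i, hi⟩ := Finsupp.ne_iff.mp h
    exact ⟨i, hmem i hi⟩
  set k := s.max' hne with hk
  have hks : k ∈ s := s.max'_mem hne
  have hkne : a k ≠ b k := (Finset.mem_filter.mp hks).2
  have htail : ∀ i, k < i → a i = b i := by
    intro i hi
    by_contra hne'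
    exact absurd (s.le_max' i (hmem i hne')) (by exact not_le.mpr hi)
  rcases lt_or_gt_of_ne hkne with h' | h'
  · exact Or.inl ⟨k, h', htail⟩
  · exact Or.inr ⟨k, h', fun i hi => (htail i hi).symm⟩

/-- A finite nonempty set has an element maximal w.r.t. a transitive irreflexive
relation composed with a function. -/
lemma exists_rel_maximal {α β : Type*} (r : β → β → Prop)
    (htr : ∀ {x y z : β}, r x y → r y z → r x z) (hirr : ∀ x : β, ¬ r x x)
    (s : Finset α) (hs : s.Nonempty) (f : α → β) :
    ∃ a ∈ s, ∀ b ∈ s, ¬ r (f a) (f b) := by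
  classical
  induction s using Finset.induction with
  | empty => exact absurd hs (by simp)
  | @insert x t hx ih =>
      rcases t.eq_empty_or_nonempty with rfl | htne
      · refine ⟨x, by simp, ?_⟩
        intro b hb
        simp only [Finset.mem_insert, Finset.notMem_empty, or_false] at hb
        subst hb; exact hirr _
      · obtain ⟨m, hm, hmax⟩ := ih htne
        by_cases hr : r (f m) (f x)
        · refine ⟨x, Finset.mem_insert_self _ _, ?_⟩
          intro b hb
          rcases Finset.mem_insert.mp hb with rfl | hb
          · exact hirr _
          · intro hrb; exact hmax b hb (htr hr hrb)
        · refine ⟨m, Finset.mem_insert_of_mem hm, ?_⟩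
          intro b hb
          rcases Finset.mem_insert.mp hb with rfl | hb
          · exact hr
          · exact hmax b hb

/-- Uniqueness of the star decomposition. -/
lemma star_unique {J : Set (Mon N)} {a d a' d' : Mon N}
    (h1 : a ∈ MinBasis J) (h2 : a' ∈ MinBasis J)
    (hs : StarCond a d) (hs' : StarCond a' d') (he : a + d = a' + d') :
    a = a' ∧ d = d' := by
  have happ : ∀ i, a i + d i = a' i + d' i := by
    intro i; have := congrArg (fun f => f i) he; simpa [Finsupp.add_apply] using this
  have hcomp : a ≤ a' ∨ a' ≤ a := by
    by_contra hc
    push_neg at hc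
    obtain ⟨h3, h4⟩ := hc
    rw [Finsupp.le_iff] at h3 h4
    push_neg at h3 h4
    obtain ⟨i, -, hi⟩ := h3
    obtain ⟨j, -, hj⟩ := h4
    have hd'i : d' i ≠ 0 := by have := happ i; omega
    have hdj : d j ≠ 0 := by have := happ j; omega
    have hij : i ≤ j := hs' j i (by omega) hd'i
    have hji : j ≤ i := hs i j (by omega) hdj
    have hij' : i = j := le_antisymm hij hji
    subst hij'
    omega
  have ha : a = a' := by
    rcases hcomp with h | h
    · exact h2.2 a h1.1 h
    · exact (h1.2 a' h2.1 h).symm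
  refine ⟨ha, ?_⟩
  rw [ha] at he
  exact add_left_cancel he

/-- KEY: if `a' + d' = d + b` with `a' ∈ J`, `StarCond a' d'`, and `b ∉ J`,
then `d' <lex d` (comparing from the top variable). -/
lemma key_lex {J : Set (Mon N)} (hJ : MonIdeal J) {a' d' b d : Mon N}
    (ha' : a' ∈ J) (hsc : StarCond a' d') (hb : b ∉ J) (he : a' + d' = d + b) :
    dLt d' d := by
  have happ : ∀ i, a' i + d' i = d i + b i := by
    intro i; have := congrArg (fun f => f i) he; simpa [Finsupp.add_apply] using this
  by_cases hdd : d' = d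
  · exfalso
    subst hdd
    have hab : a' = b := by ext i; have := happ i; omega
    exact hb (hab ▸ ha')
  rcases dLt_total hdd with h | h
  · exact h
  · exfalso
    obtain ⟨k, hk, ht⟩ := h
    have hd'k : d' k ≠ 0 := by omega
    have hsupp : ∀ i, a' i ≠ 0 → k ≤ i := fun i hi => hsc i k hi hd'k
    have hba : a' ≤ b := by
      rw [Finsupp.le_iff]
      intro i _
      rcases lt_trichotomy i k with h' | h' | h'
      · have h0 : a' i = 0 := by
          by_contra h0
          exact absurd (hsupp i h0) (by omega)
        omega
      · subst h'; have := happ i; omega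
      · have := ht i h'; have := happ i; omega
    have hbeq : b = a' + (b - a') := by
      rw [add_comm]; exact (tsub_add_cancel_of_le hba).symm
    exact hb (hbeq ▸ hJ a' ha' (b - a'))

lemma subset_msat (J : Set (Mon N)) : J ⊆ msat J := by
  intro u hu
  exact ⟨0, fun d hd => by rw [mdeg_eq_zero.mp hd, add_zero]; exact hu⟩

lemma mdeg_lt_of_lt {a b : Mon N} (h : a < b) : mdeg a < mdeg b := by
  rcases lt_or_ge (mdeg a) (mdeg b) with h' | h'
  · exact h'
  · exact absurd (eq_of_le_of_mdeg_le h.le h') h.ne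

/-- every element of a set has a minimal element of the set below it -/
lemma exists_minimal_le {S : Set (Mon N)} {u : Mon N} (hu : u ∈ S) :
    ∃ v, v ≤ u ∧ v ∈ S ∧ ∀ w ∈ S, w ≤ v → w = v := by
  suffices H : ∀ (n : ℕ) (u : Mon N), mdeg u = n → u ∈ S →
      ∃ v, v ≤ u ∧ v ∈ S ∧ ∀ w ∈ S, w ≤ v → w = v by
    exact H (mdeg u) u rfl hu
  intro n
  induction n using Nat.strong_induction_on with
  | _ n ih =>
    intro u hn hu
    by_cases hmin : ∀ w ∈ S, w ≤ u → w = u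
    · exact ⟨u, le_rfl, hu, hmin⟩
    · push_neg at hmin
      obtain ⟨w, hwS, hwle, hwne⟩ := hmin
      have hlt : mdeg w < n := hn ▸ mdeg_lt_of_lt (lt_of_le_of_ne hwle hwne)
      obtain ⟨v, hvle, hvS, hvmin⟩ := ih (mdeg w) hlt w rfl hwS
      exact ⟨v, hvle.trans hwle, hvS, hvmin⟩

/-- The combinatorial satiety has the defining property (Dickson's lemma). -/
lemma msatiety_spec {J : Set (Mon N)} (hJ : MonIdeal J) :
    ∀ u : Mon N, msatiety J ≤ mdeg u → (u ∈ J ↔ u ∈ msat J) := by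
  classical
  set M := {m | ∀ u : Mon N, m ≤ mdeg u → (u ∈ J ↔ u ∈ msat J)} with hM
  have hne : M.Nonempty := by
    set Min := {v | v ∈ msat J ∧ ∀ w ∈ msat J, w ≤ v → w = v} with hMin
    have hMinfin : Min.Finite := by
      have hpwo : (msat J).IsPWO := Set.isPWO_of_wellQuasiOrderedLE _
      have hanti : IsAntichain (· ≤ ·) Min := by
        intro x hx y hy hxy h
        exact hxy (hy.2 x hx.1 h)
      exact hanti.finite_of_partiallyWellOrderedOn (hpwo.mono (fun v hv => hv.1))
    have hch : ∀ v ∈ Min, ∃ k : ℕ, ∀ d : Mon N, mdeg d = k → v + d ∈ J := fun v hv => hv.1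
    choose kf hkf using hch
    set m0 : ℕ := hMinfin.toFinset.sup
      (fun v => mdeg v + (if h : v ∈ Min then kf v h else 0)) with hm0
    refine ⟨m0, ?_⟩
    intro u hu
    constructor
    · intro h; exact subset_msat J h
    · intro h
      obtain ⟨v, hvle, hvS, hvmin⟩ := exists_minimal_le h
      have hvMin : v ∈ Min := ⟨hvS, hvmin⟩
      have hsup : mdeg v + kf v hvMin ≤ m0 := by
        have := Finset.le_sup (f := fun v => mdeg v + (if h : v ∈ Min then kf v h else 0))
          (hMinfin.mem_toFinset.mpr hvMin)
        simpa [dif_pos hvMin] using this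
      have hdeg : mdeg v + mdeg (u - v) = mdeg u := by
        rw [← mdeg_add]; congr 1
        rw [add_comm]; exact tsub_add_cancel_of_le hvle
      have hk : kf v hvMin ≤ mdeg (u - v) := by omega
      obtain ⟨d', hd'le, hd'deg⟩ := exists_le_mdeg hk
      have hvd' : v + d' ∈ J := hkf v hvMin d' hd'deg
      have heq : u = (v + d') + ((u - v) - d') := by
        have h1 : d' + ((u - v) - d') = u - v := by
          rw [add_comm]; exact tsub_add_cancel_of_le hd'le
        have h2 : v + (u - v) = u := by
          rw [add_comm]; exact tsub_add_cancel_of_le hvle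
        rw [add_assoc, h1, h2]
      rw [heq]
      exact hJ _ hvd' _
  exact Nat.sInf_mem hne

end AuxMon

section AuxStable

variable {n : ℕ}

/-- If `u·x_0 ∈ J` for a strongly stable `J`, then `u` is in the saturation. -/
lemma mem_msat_of_add_single_zero {J : Set (Mon (n + 1))} (hss : StronglyStable J)
    {u : Mon (n + 1)} (hu : u + Finsupp.single 0 1 ∈ J) : u ∈ msat J := by
  refine ⟨1, fun d hd => ?_⟩
  obtain ⟨i, rfl⟩ := mdeg_eq_one hd
  by_cases hi : i = 0
  · subst hi; exact hu
  · refine hss.2 _ hu _ (Relation.TransGen.single ?_)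
    exact ⟨0, i, Fin.pos_of_ne_zero hi, by rw [add_assoc, add_assoc, add_comm (Finsupp.single 0 1)]⟩

lemma single_zero_add_sub {δ : Mon (n + 1)} (h : δ 0 ≠ 0) :
    Finsupp.single 0 1 + (δ - Finsupp.single 0 1) = δ := by
  ext i
  rw [Finsupp.add_apply, Finsupp.tsub_apply]
  by_cases hi : i = 0
  · subst hi; simp; omega
  · simp [Finsupp.single_apply, Ne.symm hi]

end AuxStable

/-- for `m ≥ sat J`, a `J`-marked set `G` and a homogeneous `g`
of degree `ℓ ≥ m`, one has `g ∈ ⟨V_ℓ⟩ ↔ x_0 · g ∈ ⟨V_{ℓ+1}⟩`. -/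
theorem mem_span_V_iff_xzero_mul {n : ℕ} (K : Type) [Field K]
    (J : Set (Mon (n + 1))) (g : Mon (n + 1) → MvPolynomial (Fin (n + 1)) K)
    (hss : StronglyStable J) (hms : SMarkedSet K J g)
    (m ℓ : ℕ) (hm : msatiety J ≤ m) (hℓ : m ≤ ℓ)
    (p : MvPolynomial (Fin (n + 1)) K) (hp : p.IsHomogeneous ℓ) :
    p ∈ Submodule.span K (Vset K J g ℓ) ↔
      MvPolynomial.X 0 * p ∈ Submodule.span K (Vset K J g (ℓ + 1)) := by
  classical
  have hXdef : (MvPolynomial.X 0 : MvPolynomial (Fin (n + 1)) K)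
      = MvPolynomial.monomial (Finsupp.single 0 1) 1 := rfl
  constructor
  · -- forward direction
    intro h
    refine Submodule.span_induction
      (p := fun q _ => MvPolynomial.X 0 * q ∈ Submodule.span K (Vset K J g (ℓ + 1)))
      ?_ ?_ ?_ ?_ h
    · rintro q ⟨α, δ, hα, hsc, hdeg, rfl⟩
      have heq : MvPolynomial.X 0 * (mono K δ * g α)
          = mono K (δ + Finsupp.single 0 1) * g α := by
        rw [← mul_assoc, hXdef, mono, mono, monomial_mul, one_mul, add_comm (Finsupp.single 0 1) δ]
      rw [heq]
      refine Submodule.subset_span ⟨α, δ + Finsupp.single 0 1, hα, ?_, ?_, rfl⟩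
      · intro i j hi hj
        rw [Finsupp.add_apply] at hj
        by_cases hj0 : j = 0
        · subst hj0; exact Fin.zero_le i
        · exact hsc i j hi (by simpa [Finsupp.single_apply, Ne.symm hj0] using hj)
      · rw [mdeg_add, mdeg_single]; omega
    · simp
    · intro x y _ _ hx hy
      rw [mul_add]; exact Submodule.add_mem _ hx hy
    · intro k x _ hx
      rw [mul_smul_comm]; exact Submodule.smul_mem _ k hx
  · -- backward direction
    intro h
    obtain ⟨c, hsupp, hsum⟩ := Submodule.mem_span_set.mp h
    have hvmem : ∀ v ∈ c.support, ∃ α δ : Mon (n + 1),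
        α ∈ MinBasis J ∧ StarCond α δ ∧ mdeg α + mdeg δ = ℓ + 1 ∧ v = mono K δ * g α :=
      fun v hv => hsupp hv
    choose aa dd h1 h2 h3 h4 using hvmem
    -- Claim: every `δ` occurring in the representation is divisible by `x_0`.
    have hpos : ∀ v (hv : v ∈ c.support), dd v hv 0 ≠ 0 := by
      by_contra hcon
      push_neg at hcon
      obtain ⟨v0, hv0, hv00⟩ := hcon
      set A := c.support.attach.filter (fun x => dd x.1 x.2 0 = 0) with hA
      have hAne : A.Nonempty := ⟨⟨v0, hv0⟩, by simp [hA, hv00]⟩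
      obtain ⟨xs, hxsA, hmax⟩ := exists_rel_maximal dLt dLt_trans dLt_irrefl A hAne
        (fun x => dd x.1 x.2)
      obtain ⟨vs, hvs⟩ := xs
      have hds0 : dd vs hvs 0 = 0 := by
        have := (Finset.mem_filter.mp hxsA).2
        exact this
      set αs := aa vs hvs with hαs
      set δs := dd vs hvs with hδs
      set γ := αs + δs with hγ
      have hγJ : γ ∈ J := hss.1 αs (h1 vs hvs).1 δs
      have hγdeg : mdeg γ = ℓ + 1 := by rw [hγ, mdeg_add]; exact h3 vs hvs
      -- Step A : γ 0 = 0
      have hγ0 : γ 0 = 0 := by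
        by_contra hγ0
        have happγ : γ 0 = αs 0 + δs 0 := by rw [hγ, Finsupp.add_apply]
        have hα0 : αs 0 ≠ 0 := by omega
        have hδ0 : δs = 0 := by
          ext j
          simp only [Finsupp.coe_zero, Pi.zero_apply]
          by_contra hj
          have hj0 : j ≤ (0 : Fin (n + 1)) := h2 vs hvs 0 j hα0 hj
          have hj0' : j = 0 := le_antisymm hj0 (Fin.zero_le j)
          rw [hj0'] at hj
          exact hj hds0
        have hγα : γ = αs := by rw [hγ, hδ0, add_zero]
        have hle : Finsupp.single 0 1 ≤ γ := Finsupp.single_le_iff.mpr (by omega)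
        have hγ'add : (γ - Finsupp.single 0 1) + Finsupp.single 0 1 = γ :=
          tsub_add_cancel_of_le hle
        have hγ'sat : γ - Finsupp.single 0 1 ∈ msat J :=
          mem_msat_of_add_single_zero hss (by rw [hγ'add]; exact hγJ)
        have hγ'deg : mdeg (γ - Finsupp.single 0 1) = ℓ := by
          have h6 := mdeg_add (γ - Finsupp.single 0 1) (Finsupp.single 0 1)
          rw [hγ'add, mdeg_single] at h6
          omega
        have hγ'J : γ - Finsupp.single 0 1 ∈ J :=
          (msatiety_spec hss.1 _ (by rw [hγ'deg]; omega)).mpr hγ'sat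
        have heq2 : γ - Finsupp.single 0 1 = αs :=
          (h1 vs hvs).2 _ hγ'J (hγα ▸ tsub_le_self)
        have h7 := congrArg (fun f => f 0) heq2
        simp only [Finsupp.tsub_apply, Finsupp.single_eq_same] at h7
        omega
      -- Step B : the coefficient of γ in X0 * p vanishes
      have hB : MvPolynomial.coeff γ (MvPolynomial.X 0 * p) = 0 := by
        rw [hXdef, MvPolynomial.coeff_monomial_mul']
        rw [if_neg]
        intro hle
        have := Finsupp.single_le_iff.mp hle
        omega
      -- Step C : the coefficient of γ in the sum is c vs
      have hC : MvPolynomial.coeff γ (c.sum fun mi r => r • mi) = c vs := by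
        rw [Finsupp.sum, MvPolynomial.coeff_sum]
        rw [Finset.sum_eq_single vs]
        · rw [MvPolynomial.coeff_smul, h4 vs hvs, mono, MvPolynomial.coeff_monomial_mul']
          rw [if_pos (by rw [hγ]; exact le_add_self)]
          have : γ - δs = αs := by rw [hγ]; exact add_tsub_cancel_right αs δs
          rw [this, (hms αs (h1 vs hvs)).1]
          simp
        · intro v hv hne
          rw [MvPolynomial.coeff_smul, h4 v hv, mono, MvPolynomial.coeff_monomial_mul']
          by_cases hle : dd v hv ≤ γ
          · rw [if_pos hle, one_mul]
            set β := γ - dd v hv with hβ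
            by_cases hcoeff : MvPolynomial.coeff β (g (aa v hv)) = 0
            · rw [hcoeff]; simp
            · exfalso
              have hβsupp : β ∈ (g (aa v hv)).support := MvPolynomial.mem_support_iff.mpr hcoeff
              have hγeq : dd v hv + β = γ := by
                rw [hβ]; exact add_tsub_cancel_of_le hle
              by_cases hβα : β = aa v hv
              · -- then v has the same head as vs: contradiction with uniqueness
                rw [hβα] at hγeq
                have huniq := star_unique (h1 v hv) (h1 vs hvs)
                  (h2 v hv) (h2 vs hvs) ((add_comm _ _).trans (hγeq.trans hγ))
                have : v = vs := by
                  rw [h4 v hv, h4 vs hvs, huniq.1, huniq.2]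
                exact hne this
              · have hβJ : β ∉ J := (hms (aa v hv) (h1 v hv)).2.2 β hβsupp hβα
                have hdlt : dLt δs (dd v hv) :=
                  key_lex hss.1 (h1 vs hvs).1 (h2 vs hvs) hβJ (hγ.symm.trans hγeq.symm)
                have hvA : (⟨v, hv⟩ : {x // x ∈ c.support}) ∈ A := by
                  refine Finset.mem_filter.mpr ⟨Finset.mem_attach _ _, ?_⟩
                  show dd v hv 0 = 0
                  have h8 : dd v hv 0 ≤ γ 0 := Finsupp.le_def.mp hle 0
                  omega
                exact hmax ⟨v, hv⟩ hvA hdlt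
          · rw [if_neg hle]; simp
        · intro hvs'
          exact absurd hvs hvs'
      rw [hsum] at hC
      rw [hB] at hC
      exact (Finsupp.mem_support_iff.mp hvs) hC.symm
    -- Now divide each generator by x0.
    set q : MvPolynomial (Fin (n + 1)) K :=
      ∑ x ∈ c.support.attach, c x.1 • (mono K (dd x.1 x.2 - Finsupp.single 0 1) * g (aa x.1 x.2))
      with hq
    have hXq : MvPolynomial.X 0 * q = MvPolynomial.X 0 * p := by
      rw [hq, Finset.mul_sum]
      have : ∀ x ∈ c.support.attach,
          MvPolynomial.X 0 * (c x.1 • (mono K (dd x.1 x.2 - Finsupp.single 0 1) * g (aa x.1 x.2)))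
          = c x.1 • x.1 := by
        intro x _
        rw [mul_smul_comm, ← mul_assoc, hXdef, mono, monomial_mul, one_mul,
          single_zero_add_sub (hpos x.1 x.2), ← mono, ← h4 x.1 x.2]
      rw [Finset.sum_congr rfl this, ← hsum, Finsupp.sum]
      exact Finset.sum_attach c.support (fun a => c a • a)
    have hpq : p = q := by
      have hX0 : (MvPolynomial.X 0 : MvPolynomial (Fin (n + 1)) K) ≠ 0 :=
        MvPolynomial.X_ne_zero 0
      exact (mul_left_cancel₀ hX0 hXq).symm
    rw [hpq]
    refine Submodule.sum_mem _ ?_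
    intro x _
    refine Submodule.smul_mem _ _ (Submodule.subset_span ?_)
    refine ⟨aa x.1 x.2, dd x.1 x.2 - Finsupp.single 0 1, h1 x.1 x.2, ?_, ?_, rfl⟩
    · intro i j hi hj
      refine h2 x.1 x.2 i j hi ?_
      have := Finsupp.tsub_apply (dd x.1 x.2) (Finsupp.single 0 1) j
      omega
    · have hsub : mdeg (dd x.1 x.2 - Finsupp.single 0 1) = mdeg (dd x.1 x.2) - 1 := by
        have hadd := mdeg_add (Finsupp.single 0 1) (dd x.1 x.2 - Finsupp.single 0 1)
        rw [single_zero_add_sub (hpos x.1 x.2), mdeg_single] at hadd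
        omega
      have hge : 1 ≤ mdeg (dd x.1 x.2) := by
        have h0 := apply_le_mdeg (dd x.1 x.2) 0
        have := hpos x.1 x.2
        omega
      have := h3 x.1 x.2
      omega

end Paper
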